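/- Let G be a finite group. Then the Tate homology group Ĥ_0(G; (N,2) ⊗_ℤ I) is isomorphic to G^{ab} ⊗_ℤ ℤ/2 via the map sending g ⊗ 1 to the class of N ⊗ (g − 1). -/

import Mathlib

open TensorProduct

section Coinvariants
variable {G : Type*} [Group G] {V : Type*} [AddCommGroup V] [Module ℤ V]

/-- The norm map `v ↦ ∑ g • v` for a representation of a finite group. -/
noncomputable def normMap [Fintype G] (ρ : Representation ℤ G V) : V →ₗ[ℤ] V :=
  ∑ g : G, (ρ g : V →ₗ[ℤ] V)

/-- The submodule generated by the elements `g • v - v`, so that the quotient of `V` by it is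
the module of coinvariants `ℤ ⊗_{ℤG} V`. -/
def coinvRel (ρ : Representation ℤ G V) : Submodule ℤ V :=
  Submodule.span ℤ (Set.range fun p : G × V => ρ p.1 p.2 - p.2)

/-- The coinvariants `ℤ ⊗_{ℤG} V` of a representation. -/
abbrev Coinv (ρ : Representation ℤ G V) : Type _ := V ⧸ coinvRel ρ

lemma coinvRel_le [Fintype G] (ρ : Representation ℤ G V) :
    coinvRel ρ ≤ LinearMap.ker (normMap ρ) := by
  rw [coinvRel, Submodule.span_le]
  rintro x ⟨⟨g, v⟩, rfl⟩
  have key : (normMap ρ) ((ρ g) v) = (normMap ρ) v := by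
    simp only [normMap, LinearMap.sum_apply]
    calc ∑ h : G, (ρ h) ((ρ g) v)
        = ∑ h : G, (ρ (h * g)) v := by
          refine Finset.sum_congr rfl fun h _ => ?_
          rw [map_mul]; rfl
      _ = ∑ h : G, (ρ h) v :=
          Fintype.sum_bijective (· * g) (Group.mulRight_bijective g) _ _ fun x => rfl
  simp only [SetLike.mem_coe, LinearMap.mem_ker, map_sub, key, sub_self]

/-- The norm map `ℤ ⊗_{ℤG} V → V`, `1 ⊗ v ↦ ∑ g • v`, induced on the coinvariants.  Its kernel
is the Tate homology group `Ĥ₀(G; V)` (the codomain restriction to the invariants `V^G` does not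
change the kernel). -/
noncomputable def normBar [Fintype G] (ρ : Representation ℤ G V) :
    @LinearMap ℤ ℤ _ _ (RingHom.id ℤ) (Coinv ρ) V _ _ (Submodule.Quotient.module (coinvRel ρ)) _ :=
  Submodule.liftQ (coinvRel ρ) (normMap ρ) (coinvRel_le ρ)

end Coinvariants

section SubQuot
variable {G : Type*} [Group G] {V : Type*} [AddCommGroup V] [Module ℤ V]

/-- The restriction of a representation to an invariant submodule. -/
def subRep (ρ : Representation ℤ G V) (p : Submodule ℤ V)
    (hp : ∀ g : G, ∀ x ∈ p, ρ g x ∈ p) : Representation ℤ G p where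
  toFun g := (ρ g).restrict (hp g)
  map_one' := by
    ext x
    simp [LinearMap.restrict_apply]
  map_mul' g h := by
    ext x
    simp [LinearMap.restrict_apply, map_mul]

/-- The representation induced on the quotient by an invariant submodule. -/
noncomputable def quotRep (ρ : Representation ℤ G V) (p : Submodule ℤ V)
    (hp : ∀ g : G, ∀ x ∈ p, ρ g x ∈ p) : Representation ℤ G (V ⧸ p) where
  toFun g := Submodule.mapQ p p (ρ g) (hp g)
  map_one' := by
    apply LinearMap.ext
    intro x
    obtain ⟨v, rfl⟩ := Submodule.Quotient.mk_surjective p x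
    simp [Submodule.mapQ_apply]
  map_mul' g h := by
    apply LinearMap.ext
    intro x
    obtain ⟨v, rfl⟩ := Submodule.Quotient.mk_surjective p x
    simp [Submodule.mapQ_apply, map_mul]

end SubQuot

section GroupRing
variable (G : Type*) [Group G]

/-- The left regular representation of `G` on the group ring `ℤG`. -/
noncomputable def regRep : Representation ℤ G (MonoidAlgebra ℤ G) where
  toFun g := LinearMap.mulLeft ℤ (MonoidAlgebra.of ℤ G g)
  map_one' := by
    apply LinearMap.ext; intro x
    simp [MonoidAlgebra.of_apply, ← MonoidAlgebra.one_def]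
  map_mul' g h := by
    apply LinearMap.ext; intro x
    simp only [MonoidAlgebra.of_apply, LinearMap.mulLeft_apply, Module.End.mul_apply]
    rw [← mul_assoc, MonoidAlgebra.single_mul_single, mul_one]

/-- The augmentation map `ε : ℤG → ℤ`. -/
noncomputable def aug : MonoidAlgebra ℤ G →ₐ[ℤ] ℤ := MonoidAlgebra.lift ℤ ℤ G 1

/-- The augmentation ideal `I = ker(ε : ℤG → ℤ)`. -/
noncomputable def augI : Ideal (MonoidAlgebra ℤ G) := RingHom.ker (aug G).toRingHom

/-- The mod 2 augmentation map `ℤG → ℤ/2`. -/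
noncomputable def aug2 : MonoidAlgebra ℤ G →+* ZMod 2 :=
  (Int.castRingHom (ZMod 2)).comp (aug G).toRingHom

/-- The ideal `(I, 2) = ker(ℤG → ℤ/2)` generated by the augmentation ideal and `2`. -/
noncomputable def I2 : Ideal (MonoidAlgebra ℤ G) := RingHom.ker (aug2 G)

/-- The norm element `N = ∑_{g ∈ G} g ∈ ℤG`. -/
noncomputable def Nelt [Fintype G] : MonoidAlgebra ℤ G := ∑ g : G, MonoidAlgebra.of ℤ G g

/-- The (left) ideal of `ℤG` generated by the norm element `N`; the quotient by it is `ℤG/N`. -/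
noncomputable def NIdeal [Fintype G] : Ideal (MonoidAlgebra ℤ G) := Ideal.span {Nelt G}

/-- The left ideal `(N, 2)` of `ℤG` generated by the norm element `N` and `2`. -/
noncomputable def N2 [Fintype G] : Ideal (MonoidAlgebra ℤ G) := Ideal.span {Nelt G, 2}

lemma aug_single (g : G) : aug G (MonoidAlgebra.single g 1) = 1 := by
  simp [aug, MonoidAlgebra.lift_single]

lemma of_sub_one_mem_augI (g : G) :
    MonoidAlgebra.of ℤ G g - 1 ∈ (augI G).restrictScalars ℤ := by
  simp [augI, RingHom.mem_ker, map_sub, aug_single]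

lemma of_sub_one_mem_I2 (g : G) :
    MonoidAlgebra.of ℤ G g - 1 ∈ (I2 G).restrictScalars ℤ := by
  simp [I2, aug2, RingHom.mem_ker, map_sub, aug_single]

lemma two_mem_I2 : (2 : MonoidAlgebra ℤ G) ∈ (I2 G).restrictScalars ℤ := by
  have : (aug2 G) 2 = 2 := by simp [map_ofNat]
  simp [I2, RingHom.mem_ker, this]
  decide

lemma N_mem_I2 [Fintype G] (h : Even (Fintype.card G)) :
    Nelt G ∈ (I2 G).restrictScalars ℤ := by
  have : (aug2 G) (Nelt G) = (Fintype.card G : ZMod 2) := by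
    simp [Nelt, map_sum, aug2, aug_single]
  simp only [Submodule.restrictScalars_mem, I2, RingHom.mem_ker, this]
  rw [ZMod.natCast_eq_zero_iff]
  exact h.two_dvd

lemma N_mem_N2 [Fintype G] : Nelt G ∈ (N2 G).restrictScalars ℤ :=
  Ideal.subset_span (by simp)

lemma two_mem_N2 [Fintype G] : (2 : MonoidAlgebra ℤ G) ∈ (N2 G).restrictScalars ℤ :=
  Ideal.subset_span (by simp)

lemma ideal_invariant (J : Ideal (MonoidAlgebra ℤ G)) :
    ∀ g : G, ∀ x ∈ J.restrictScalars ℤ, (regRep G) g x ∈ J.restrictScalars ℤ := by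
  intro g x hx
  exact J.mul_mem_left _ hx

/-- A (left) ideal of `ℤG`, regarded as a representation of `G`. -/
noncomputable def idealRep (J : Ideal (MonoidAlgebra ℤ G)) :
    Representation ℤ G ↥(J.restrictScalars ℤ) :=
  subRep (regRep G) (J.restrictScalars ℤ) (ideal_invariant G J)

/-- The quotient `ℤG/N` of `ℤG` by the ideal generated by the norm element, as a
representation of `G`. -/
noncomputable def quotNRep [Fintype G] :
    Representation ℤ G (MonoidAlgebra ℤ G ⧸ (NIdeal G).restrictScalars ℤ) :=
  quotRep (regRep G) ((NIdeal G).restrictScalars ℤ) (ideal_invariant G (NIdeal G))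

/-- `2` as an element of `(I,2)`. -/
noncomputable def twoI2 : ↥((I2 G).restrictScalars ℤ) := ⟨2, two_mem_I2 G⟩

/-- `g - 1` as an element of `(I,2)`. -/
noncomputable def gm1 (g : G) : ↥((I2 G).restrictScalars ℤ) :=
  ⟨MonoidAlgebra.of ℤ G g - 1, of_sub_one_mem_I2 G g⟩

/-- `g - 1` as an element of the augmentation ideal `I`. -/
noncomputable def gm1I (g : G) : ↥((augI G).restrictScalars ℤ) :=
  ⟨MonoidAlgebra.of ℤ G g - 1, of_sub_one_mem_augI G g⟩

/-- The norm element as an element of `(I,2)` (for `G` of even order). -/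
noncomputable def NeltI2 [Fintype G] (h : Even (Fintype.card G)) :
    ↥((I2 G).restrictScalars ℤ) := ⟨Nelt G, N_mem_I2 G h⟩

/-- The norm element as an element of `(N,2)`. -/
noncomputable def NeltN2 [Fintype G] : ↥((N2 G).restrictScalars ℤ) := ⟨Nelt G, N_mem_N2 G⟩

end GroupRing
section Chunk1
open MonoidAlgebra
variable {G : Type*} [Group G]

lemma single_eq (g : G) (n : ℤ) :
    (MonoidAlgebra.ofCoeff (Finsupp.single g n) : MonoidAlgebra ℤ G) = MonoidAlgebra.single g n :=
  rfl

lemma Nelt_apply [Fintype G] (x : G) : (Nelt G).coeff x = 1 := by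
  classical
  show (∑ g : G, MonoidAlgebra.of ℤ G g).coeff x = 1
  rw [show ((∑ g : G, MonoidAlgebra.of ℤ G g).coeff x) = ∑ g : G, (MonoidAlgebra.of ℤ G g).coeff x
    by rw [MonoidAlgebra.coeff_sum]; exact Finset.sum_apply' x]
  simp [MonoidAlgebra.of_apply, MonoidAlgebra.coeff_single_apply]

lemma single_mul_Nelt [Fintype G] (g : G) : MonoidAlgebra.of ℤ G g * Nelt G = Nelt G := by
  refine MonoidAlgebra.ext (Finsupp.ext fun x => ?_)
  rw [MonoidAlgebra.of_apply, MonoidAlgebra.coeff_single_mul_apply]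
  simp [Nelt_apply]

lemma Nelt_mul_single [Fintype G] (g : G) : Nelt G * MonoidAlgebra.of ℤ G g = Nelt G := by
  refine MonoidAlgebra.ext (Finsupp.ext fun x => ?_)
  rw [MonoidAlgebra.of_apply, MonoidAlgebra.coeff_mul_single_apply]
  simp [Nelt_apply]

lemma aug_single' (g : G) (n : ℤ) : aug G (MonoidAlgebra.single g n) = n := by
  have : (MonoidAlgebra.single g n : MonoidAlgebra ℤ G) = n • MonoidAlgebra.single g 1 := by
    rw [MonoidAlgebra.smul_single]; simp
  rw [this, map_zsmul, aug_single]
  simp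

lemma mul_Nelt [Fintype G] (x : MonoidAlgebra ℤ G) : x * Nelt G = aug G x • Nelt G := by
  induction x using MonoidAlgebra.induction_linear with
  | zero => simp
  | add f g hf hg => rw [add_mul, hf, hg, map_add, add_smul]
  | single a b =>
      have : (MonoidAlgebra.single a b : MonoidAlgebra ℤ G) = b • MonoidAlgebra.single a 1 := by
        rw [MonoidAlgebra.smul_single]; simp
      rw [this, smul_mul_assoc, map_zsmul,
        show (MonoidAlgebra.single a 1 : MonoidAlgebra ℤ G) = MonoidAlgebra.of ℤ G a from rfl,
        single_mul_Nelt]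
      simp [MonoidAlgebra.of_apply, aug_single]

lemma Nelt_mul [Fintype G] (x : MonoidAlgebra ℤ G) : Nelt G * x = aug G x • Nelt G := by
  induction x using MonoidAlgebra.induction_linear with
  | zero => simp
  | add f g hf hg => rw [mul_add, hf, hg, map_add, add_smul]
  | single a b =>
      have : (MonoidAlgebra.single a b : MonoidAlgebra ℤ G) = b • MonoidAlgebra.single a 1 := by
        rw [MonoidAlgebra.smul_single]; simp
      rw [this, mul_smul_comm, map_zsmul,
        show (MonoidAlgebra.single a 1 : MonoidAlgebra ℤ G) = MonoidAlgebra.of ℤ G a from rfl,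
        Nelt_mul_single]
      simp [MonoidAlgebra.of_apply, aug_single]

lemma aug_eq_sum [Fintype G] (x : MonoidAlgebra ℤ G) : aug G x = ∑ g : G, x.coeff g := by
  induction x using MonoidAlgebra.induction_linear with
  | zero => simp
  | add f g hf hg =>
      rw [map_add, hf, hg, ← Finset.sum_add_distrib]
      exact Finset.sum_congr rfl fun g _ => rfl
  | single a b =>
      classical
      rw [aug_single']
      rw [show (∑ g : G, (MonoidAlgebra.single a b : MonoidAlgebra ℤ G).coeff g)
        = ∑ g : G, if a = g then b else 0 from
        Finset.sum_congr rfl fun g _ => MonoidAlgebra.coeff_single_apply]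
      simp

lemma repr_sum [Fintype G] (x : MonoidAlgebra ℤ G) :
    ∑ g : G, x.coeff g • MonoidAlgebra.of ℤ G g = x := by
  classical
  refine MonoidAlgebra.ext (Finsupp.ext fun h => ?_)
  rw [show ((∑ g : G, x.coeff g • MonoidAlgebra.of ℤ G g).coeff h)
    = ∑ g : G, (x.coeff g • MonoidAlgebra.of ℤ G g).coeff h
    by rw [MonoidAlgebra.coeff_sum]; exact Finset.sum_apply' h]
  simp [MonoidAlgebra.of_apply, MonoidAlgebra.coeff_single_apply, MonoidAlgebra.coeff_smul_apply,
    Finsupp.single_apply]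

lemma N2_mem [Fintype G] {a : MonoidAlgebra ℤ G} (ha : a ∈ N2 G) :
    ∃ (n : ℤ) (y : MonoidAlgebra ℤ G), a = n • Nelt G + (2:ℤ) • y := by
  rw [N2, Ideal.mem_span_pair] at ha
  obtain ⟨u, v, huv⟩ := ha
  refine ⟨aug G u, v, ?_⟩
  rw [← huv, mul_Nelt]
  congr 1
  rw [mul_two, two_smul]

lemma n2_coeff [Fintype G] {a : MonoidAlgebra ℤ G} (ha : a ∈ N2 G) (x : G) :
    (2:ℤ) ∣ (a.coeff x - a.coeff 1) := by
  obtain ⟨n, y, rfl⟩ := N2_mem ha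
  have hx : ∀ z : G, (n • Nelt G + (2:ℤ) • y).coeff z = n + 2 * y.coeff z := by
    intro z
    rw [MonoidAlgebra.coeff_add, Finsupp.add_apply, MonoidAlgebra.coeff_smul_apply,
      MonoidAlgebra.coeff_smul_apply, Nelt_apply]
    simp
  rw [hx, hx]
  exact ⟨y.coeff x - y.coeff 1, by ring⟩

lemma augI_mem_iff (x : MonoidAlgebra ℤ G) : x ∈ augI G ↔ aug G x = 0 := Iff.rfl

end Chunk1
section Chunk2
open MonoidAlgebra
variable {G : Type*} [Group G]

/-- The target group `G^{ab} ⊗ ℤ/2`. -/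
local notation "TT" => (Additive (Abelianization G)) ⊗[ℤ] (ZMod 2)

/-- The generator `g ⊗ 1` of `TT`. -/
noncomputable def genT (g : G) : (Additive (Abelianization G)) ⊗[ℤ] (ZMod 2) :=
  (Additive.ofMul (Abelianization.of g)) ⊗ₜ[ℤ] (1 : ZMod 2)

lemma genT_mul (g h : G) : genT (g * h) = genT g + genT h := by
  unfold genT
  rw [show Additive.ofMul (Abelianization.of (g * h))
    = Additive.ofMul (Abelianization.of g) + Additive.ofMul (Abelianization.of h) by
      rw [map_mul]; rfl]
  rw [TensorProduct.add_tmul]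

lemma genT_one : genT (1 : G) = 0 := by
  unfold genT
  rw [show Additive.ofMul (Abelianization.of (1 : G)) = 0 by rw [map_one]; rfl]
  rw [TensorProduct.zero_tmul]

lemma two_smul_T (t : (Additive (Abelianization G)) ⊗[ℤ] (ZMod 2)) : (2:ℤ) • t = 0 := by
  induction t with
  | zero => simp
  | tmul x c =>
      rw [← TensorProduct.tmul_smul]
      have : (2:ℤ) • c = 0 := by
        have : (2:ℤ) • c = 2 * c := by
          rw [two_smul, two_mul]
        rw [this]
        have h2 : (2 : ZMod 2) = 0 := by decide
        rw [h2, zero_mul]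
      rw [this, TensorProduct.tmul_zero]
  | add a b ha hb => rw [smul_add, ha, hb, add_zero]

lemma smul_mod {X : Type*} [AddCommGroup X] (x : X) (hx : (2:ℤ) • x = 0) {m n : ℤ}
    (h : (2:ℤ) ∣ (m - n)) : m • x = n • x := by
  obtain ⟨k, hk⟩ := h
  have hm : m = n + 2 * k := by linarith
  rw [hm, add_smul, mul_comm, mul_smul, hx, smul_zero, add_zero]

lemma dvd_of_zmod2_eq {m n : ℤ} (h : (m : ZMod 2) = n) : (2:ℤ) ∣ (m - n) := by
  have : ((m - n : ℤ) : ZMod 2) = 0 := by push_cast [h]; ring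
  exact (ZMod.intCast_zmod_eq_zero_iff_dvd _ 2).mp this

noncomputable def zsmAdd {X : Type*} [AddCommGroup X] (q : X) (hq : (2:ℤ) • q = 0) :
    ZMod 2 →+ X where
  toFun c := ((c.val : ℤ)) • q
  map_zero' := by simp
  map_add' c d := by
    show (((c+d).val : ℤ)) • q = ((c.val : ℤ)) • q + ((d.val : ℤ)) • q
    have h1 : (((c+d).val:ℤ)) • q = (((c.val:ℤ) + (d.val:ℤ))) • q :=
      smul_mod q hq (dvd_of_zmod2_eq (by push_cast [ZMod.natCast_val, ZMod.cast_id]; ring))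
    rw [h1, add_smul]

noncomputable def zsm {X : Type*} [AddCommGroup X] [Module ℤ X] (q : X) (hq : (2:ℤ) • q = 0) :
    ZMod 2 →ₗ[ℤ] X where
  toFun := zsmAdd q hq
  map_add' := map_add _
  map_smul' n c := by
    simp only [RingHom.id_apply]
    refine Eq.trans (congrArg (zsmAdd q hq) (int_smul_eq_zsmul inferInstance n c)) ?_
    refine Eq.trans (map_zsmul (zsmAdd q hq) n c) ?_
    exact (int_smul_eq_zsmul inferInstance n _).symm

lemma zsm_apply {X : Type*} [AddCommGroup X] [Module ℤ X] (q : X) (hq : (2:ℤ) • q = 0)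
    (c : ZMod 2) : zsm q hq c = ((c.val : ℤ)) • q := rfl

/-- The map `θ' : ℤG → G^{ab} ⊗ ℤ/2`, `g ↦ g ⊗ 1`. -/
noncomputable def thetaAux : MonoidAlgebra ℤ G →ₗ[ℤ] (Additive (Abelianization G)) ⊗[ℤ] (ZMod 2) :=
  (Finsupp.lsum ℤ fun g : G => LinearMap.toSpanSingleton ℤ _ (genT g)) ∘ₗ
    (MonoidAlgebra.coeffLinearEquiv ℤ).toLinearMap

lemma thetaAux_single (a : G) (n : ℤ) : thetaAux (MonoidAlgebra.single a n) = n • genT a := by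
  rw [thetaAux, LinearMap.comp_apply]
  erw [Finsupp.lsum_single]
  rfl

lemma thetaAux_mul_single (g : G) (x : MonoidAlgebra ℤ G) :
    thetaAux (MonoidAlgebra.of ℤ G g * x) = thetaAux x + aug G x • genT g := by
  induction x using MonoidAlgebra.induction_linear with
  | zero => simp
  | add f f' hf hf' =>
      rw [mul_add, map_add, hf, hf', map_add, map_add, add_smul]
      abel
  | single a b =>
      rw [show MonoidAlgebra.of ℤ G g * MonoidAlgebra.single a b
        = MonoidAlgebra.single (g * a) b by
          rw [MonoidAlgebra.of_apply, MonoidAlgebra.single_mul_single, one_mul]]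
      rw [thetaAux_single, thetaAux_single, aug_single', genT_mul, smul_add]
      abel

end Chunk2
section Chunk3
open MonoidAlgebra
variable {G : Type*} [Group G] [Fintype G]

/-- `2` as an element of `(N,2)`. -/
noncomputable def twoN2 (G : Type*) [Group G] [Fintype G] : ↥((N2 G).restrictScalars ℤ) :=
  ⟨2, two_mem_N2 G⟩

lemma two_zsmul_of_mem (g : G) : (2:ℤ) • (MonoidAlgebra.of ℤ G g) ∈ (N2 G).restrictScalars ℤ := by
  have : (2:ℤ) • (MonoidAlgebra.of ℤ G g) = MonoidAlgebra.of ℤ G g * 2 := by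
    rw [mul_two, two_zsmul]
  rw [Submodule.restrictScalars_mem, this]
  exact Ideal.mul_mem_left _ _ (Ideal.subset_span (by simp))

/-- `2g` as an element of `(N,2)`. -/
noncomputable def aElt (g : G) : ↥((N2 G).restrictScalars ℤ) :=
  ⟨(2:ℤ) • (MonoidAlgebra.of ℤ G g), two_zsmul_of_mem g⟩

lemma zsmul_mem_N2 (y : MonoidAlgebra ℤ G) : (2:ℤ) • y ∈ (N2 G).restrictScalars ℤ := by
  have : (2:ℤ) • y = y * 2 := by rw [mul_two, two_zsmul]
  rw [Submodule.restrictScalars_mem, this]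
  exact Ideal.mul_mem_left _ _ (Ideal.subset_span (by simp))

lemma idealRep_coe (J : Ideal (MonoidAlgebra ℤ G)) (g : G) (x : ↥(J.restrictScalars ℤ)) :
    ((idealRep G J g x : ↥(J.restrictScalars ℤ)) : MonoidAlgebra ℤ G)
      = MonoidAlgebra.of ℤ G g * (x : MonoidAlgebra ℤ G) := rfl

lemma rhoA_N (g : G) : idealRep G (N2 G) g (NeltN2 G) = NeltN2 G := by
  apply Subtype.ext
  rw [idealRep_coe]
  exact single_mul_Nelt g

lemma rhoA_two (g : G) : idealRep G (N2 G) g (twoN2 G) = aElt g := by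
  apply Subtype.ext
  rw [idealRep_coe]
  show MonoidAlgebra.of ℤ G g * 2 = (2:ℤ) • (MonoidAlgebra.of ℤ G g)
  rw [mul_two, two_zsmul]

lemma sum_rhoB (b : ↥((augI G).restrictScalars ℤ)) :
    ∑ h : G, idealRep G (augI G) h b = 0 := by
  apply Subtype.ext
  rw [show ((∑ h : G, idealRep G (augI G) h b : ↥((augI G).restrictScalars ℤ))
      : MonoidAlgebra ℤ G) = ∑ h : G, ((idealRep G (augI G) h b : ↥((augI G).restrictScalars ℤ))
      : MonoidAlgebra ℤ G) from Submodule.coe_sum _ _ _]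
  simp only [idealRep_coe]
  rw [← Finset.sum_mul, show (∑ h : G, MonoidAlgebra.of ℤ G h) = Nelt G from rfl, Nelt_mul]
  have hb : aug G (b : MonoidAlgebra ℤ G) = 0 := b.2
  rw [hb, zero_smul]
  rfl

lemma sum_rhoB_inv (b : ↥((augI G).restrictScalars ℤ)) :
    ∑ h : G, idealRep G (augI G) h⁻¹ b = 0 := by
  rw [show (∑ h : G, idealRep G (augI G) h⁻¹ b) = ∑ h : G, idealRep G (augI G) h b from
    Fintype.sum_bijective (·⁻¹) (Equiv.inv G).bijective _ _ fun x => rfl]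
  exact sum_rhoB b

end Chunk3
set_option synthInstance.maxHeartbeats 1000000
set_option maxHeartbeats 2000000
section Chunk4
open MonoidAlgebra
variable {G : Type*} [Group G] [Fintype G]

/-- Abbreviation for the tensor product representation on `(N,2) ⊗ I`. -/
noncomputable abbrev rhoM (G : Type*) [Group G] [Fintype G] :
    Representation ℤ G (↥((N2 G).restrictScalars ℤ) ⊗[ℤ] ↥((augI G).restrictScalars ℤ)) :=
  (idealRep G (N2 G)).tprod (idealRep G (augI G))

lemma rel_mk (g : G) (m : ↥((N2 G).restrictScalars ℤ) ⊗[ℤ] ↥((augI G).restrictScalars ℤ)) :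
    (Submodule.Quotient.mk (rhoM G g m) : Coinv (rhoM G)) = Submodule.Quotient.mk m := by
  rw [Submodule.Quotient.eq]
  exact Submodule.subset_span ⟨(g, m), rfl⟩

lemma normMap_apply {V : Type*} [AddCommGroup V] [Module ℤ V] (ρ : Representation ℤ G V)
    (v : V) : normMap ρ v = ∑ g : G, ρ g v := by
  rw [normMap, LinearMap.sum_apply]

lemma normMap_tmul (a : ↥((N2 G).restrictScalars ℤ)) (b : ↥((augI G).restrictScalars ℤ)) :
    normMap (rhoM G) (a ⊗ₜ[ℤ] b)
      = ∑ h : G, (idealRep G (N2 G) h a) ⊗ₜ[ℤ] (idealRep G (augI G) h b) := by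
  rw [normMap_apply]
  exact Finset.sum_congr rfl fun h _ => by erw [rhoM, Representation.tprod_apply, TensorProduct.map_tmul]

lemma normMap_N_tmul (b : ↥((augI G).restrictScalars ℤ)) :
    normMap (rhoM G) ((NeltN2 G) ⊗ₜ[ℤ] b) = 0 := by
  rw [normMap_tmul]
  have : ∀ h : G, (idealRep G (N2 G) h (NeltN2 G)) ⊗ₜ[ℤ] (idealRep G (augI G) h b)
      = (NeltN2 G) ⊗ₜ[ℤ] (idealRep G (augI G) h b) := fun h => by rw [rhoA_N]
  rw [Finset.sum_congr rfl fun h _ => this h, ← TensorProduct.tmul_sum, sum_rhoB,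
    TensorProduct.tmul_zero]

lemma normMap_two_tmul (c : ↥((augI G).restrictScalars ℤ)) :
    normMap (rhoM G) ((twoN2 G) ⊗ₜ[ℤ] c)
      = ∑ h : G, (aElt h) ⊗ₜ[ℤ] (idealRep G (augI G) h c) := by
  rw [normMap_tmul]
  exact Finset.sum_congr rfl fun h _ => by rw [rhoA_two]

lemma A1 (h : G) (b : ↥((augI G).restrictScalars ℤ)) :
    (Submodule.Quotient.mk ((aElt h) ⊗ₜ[ℤ] b) : Coinv (rhoM G))
      = Submodule.Quotient.mk ((twoN2 G) ⊗ₜ[ℤ] (idealRep G (augI G) h⁻¹ b)) := by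
  rw [← rel_mk h ((twoN2 G) ⊗ₜ[ℤ] (idealRep G (augI G) h⁻¹ b))]
  congr 1
  erw [rhoM, Representation.tprod_apply, TensorProduct.map_tmul, rhoA_two]
  congr 1
  rw [← Module.End.mul_apply, ← map_mul, mul_inv_cancel, map_one, Module.End.one_apply]

/-- `a ↦ [a ⊗ b]` as a linear map into coinvariants. -/
noncomputable def LbQ (b : ↥((augI G).restrictScalars ℤ)) :
    ↥((N2 G).restrictScalars ℤ) →ₗ[ℤ] Coinv (rhoM G) :=
  (coinvRel (rhoM G)).mkQ ∘ₗ
    ((TensorProduct.mk ℤ ↥((N2 G).restrictScalars ℤ) ↥((augI G).restrictScalars ℤ)).flip b)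

lemma LbQ_apply (b : ↥((augI G).restrictScalars ℤ)) (a : ↥((N2 G).restrictScalars ℤ)) :
    LbQ b a = Submodule.Quotient.mk (a ⊗ₜ[ℤ] b) := rfl

/-- `c ↦ [2 ⊗ c]` as a linear map into coinvariants. -/
noncomputable def LcQ :
    ↥((augI G).restrictScalars ℤ) →ₗ[ℤ] Coinv (rhoM G) :=
  (coinvRel (rhoM G)).mkQ ∘ₗ
    (TensorProduct.mk ℤ ↥((N2 G).restrictScalars ℤ) ↥((augI G).restrictScalars ℤ) (twoN2 G))

lemma LcQ_apply (c : ↥((augI G).restrictScalars ℤ)) :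
    LcQ c = Submodule.Quotient.mk ((twoN2 G) ⊗ₜ[ℤ] c) := rfl

/-- `b ↦ [N ⊗ b]` as a linear map into coinvariants. -/
noncomputable def LnQ :
    ↥((augI G).restrictScalars ℤ) →ₗ[ℤ] Coinv (rhoM G) :=
  (coinvRel (rhoM G)).mkQ ∘ₗ
    (TensorProduct.mk ℤ ↥((N2 G).restrictScalars ℤ) ↥((augI G).restrictScalars ℤ) (NeltN2 G))

lemma LnQ_apply (b : ↥((augI G).restrictScalars ℤ)) :
    LnQ b = Submodule.Quotient.mk ((NeltN2 G) ⊗ₜ[ℤ] b) := rfl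

lemma two_smul_decomp (y : MonoidAlgebra ℤ G) :
    (⟨(2:ℤ) • y, zsmul_mem_N2 y⟩ : ↥((N2 G).restrictScalars ℤ)) = ∑ h : G, (y.coeff h) • aElt h := by
  classical
  apply Subtype.ext
  rw [show ((∑ h : G, (y.coeff h) • aElt h : ↥((N2 G).restrictScalars ℤ)) : MonoidAlgebra ℤ G)
    = ∑ h : G, ((y.coeff h • aElt h : ↥((N2 G).restrictScalars ℤ)) : MonoidAlgebra ℤ G) from
      Submodule.coe_sum _ _ _]
  have hsm : ∀ h : G, ((y.coeff h • aElt h : ↥((N2 G).restrictScalars ℤ)) : MonoidAlgebra ℤ G)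
      = y.coeff h • ((2:ℤ) • (MonoidAlgebra.of ℤ G h)) := fun h =>
    map_zsmul ((N2 G).restrictScalars ℤ).subtype (y.coeff h) (aElt h)
  rw [Finset.sum_congr rfl fun h _ => hsm h]
  refine MonoidAlgebra.ext (Finsupp.ext fun x => ?_)
  rw [show ((∑ h : G, y.coeff h • ((2:ℤ) • (MonoidAlgebra.of ℤ G h)) : MonoidAlgebra ℤ G).coeff x)
    = ∑ h : G, (y.coeff h • ((2:ℤ) • (MonoidAlgebra.of ℤ G h)) : MonoidAlgebra ℤ G).coeff x from
      (by rw [MonoidAlgebra.coeff_sum]; exact Finset.sum_apply' x)]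
  have : ∀ h : G, (y.coeff h • ((2:ℤ) • (MonoidAlgebra.of ℤ G h)) : MonoidAlgebra ℤ G).coeff x
      = y.coeff h * (2 * (if h = x then 1 else 0)) := by
    intro h
    rw [MonoidAlgebra.coeff_smul_apply, MonoidAlgebra.coeff_smul_apply, MonoidAlgebra.of_apply,
      MonoidAlgebra.coeff_single_apply, smul_eq_mul, smul_eq_mul]
  rw [Finset.sum_congr rfl fun h _ => this h, MonoidAlgebra.coeff_smul_apply, smul_eq_mul]
  simp [Finset.sum_ite_eq', mul_comm]

/-- reduction of `[2y ⊗ b]` to the canonical form `[2 ⊗ c]`. -/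
lemma claim1 (y : MonoidAlgebra ℤ G) (b : ↥((augI G).restrictScalars ℤ)) :
    (Submodule.Quotient.mk ((⟨(2:ℤ) • y, zsmul_mem_N2 y⟩ :
        ↥((N2 G).restrictScalars ℤ)) ⊗ₜ[ℤ] b) : Coinv (rhoM G))
      = LcQ (∑ h : G, (y.coeff h) • idealRep G (augI G) h⁻¹ b) := by
  rw [← LbQ_apply, two_smul_decomp, map_sum, map_sum]
  refine Finset.sum_congr rfl fun h _ => ?_
  rw [map_zsmul, map_zsmul, LbQ_apply, A1, LcQ_apply]
end Chunk4
section Chunk5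
open MonoidAlgebra
variable {G : Type*} [Group G] [Fintype G]

/-- The coefficient-at-1 functional on `(N,2)`. -/
noncomputable def coeffA1 : ↥((N2 G).restrictScalars ℤ) →ₗ[ℤ] ℤ where
  toFun a := (a : MonoidAlgebra ℤ G).coeff 1
  map_add' a b := rfl
  map_smul' n a := rfl

/-- The coefficient-at-y functional on `I`. -/
noncomputable def coeffB (y : G) : ↥((augI G).restrictScalars ℤ) →ₗ[ℤ] ℤ where
  toFun b := (b : MonoidAlgebra ℤ G).coeff y
  map_add' a b := rfl
  map_smul' n a := rfl

/-- `θ : I → G^{ab} ⊗ ℤ/2`. -/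
noncomputable def theta : ↥((augI G).restrictScalars ℤ) →ₗ[ℤ]
    (Additive (Abelianization G)) ⊗[ℤ] (ZMod 2) :=
  thetaAux ∘ₗ ((augI G).restrictScalars ℤ).subtype

/-- `ψ : (N,2) ⊗ I → G^{ab} ⊗ ℤ/2`, `a ⊗ b ↦ ε₂(a)·θ(b)`. -/
noncomputable def psi : (↥((N2 G).restrictScalars ℤ) ⊗[ℤ] ↥((augI G).restrictScalars ℤ))
    →ₗ[ℤ] (Additive (Abelianization G)) ⊗[ℤ] (ZMod 2) :=
  TensorProduct.lift ((coeffA1 (G := G)).smulRight theta)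

lemma psi_tmul (a : ↥((N2 G).restrictScalars ℤ)) (b : ↥((augI G).restrictScalars ℤ)) :
    psi (a ⊗ₜ[ℤ] b) = ((a : MonoidAlgebra ℤ G).coeff 1) • thetaAux (b : MonoidAlgebra ℤ G) := by
  erw [psi, TensorProduct.lift.tmul, LinearMap.smulRight_apply]
  exact int_smul_eq_zsmul _ _ _

lemma psi_rho (g : G)
    (m : ↥((N2 G).restrictScalars ℤ) ⊗[ℤ] ↥((augI G).restrictScalars ℤ)) :
    psi (rhoM G g m) = psi m := by
  induction m with
  | zero => rw [map_zero, map_zero]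
  | add m₁ m₂ h₁ h₂ => rw [map_add, map_add, map_add, h₁, h₂]
  | tmul a b =>
      rw [show rhoM G g (a ⊗ₜ[ℤ] b)
          = (idealRep G (N2 G) g a) ⊗ₜ[ℤ] (idealRep G (augI G) g b) from rfl, psi_tmul, psi_tmul,
        idealRep_coe, idealRep_coe, thetaAux_mul_single, MonoidAlgebra.of_apply,
        MonoidAlgebra.coeff_single_mul_apply]
      have hb : aug G (b : MonoidAlgebra ℤ G) = 0 := b.2
      rw [hb, zero_smul, add_zero, one_mul, mul_one]
      exact smul_mod _ (two_smul_T _) (n2_coeff a.2 g⁻¹)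

lemma coinvRel_le_psi : coinvRel (rhoM G) ≤ LinearMap.ker psi := by
  rw [coinvRel, Submodule.span_le]
  rintro x ⟨⟨g, m⟩, rfl⟩
  simp only [SetLike.mem_coe, LinearMap.mem_ker, map_sub]
  rw [psi_rho, sub_self]

/-- `ψ` descended to the coinvariants. -/
noncomputable def psibar : Coinv (rhoM G) →ₗ[ℤ]
    (Additive (Abelianization G)) ⊗[ℤ] (ZMod 2) :=
  Submodule.liftQ (coinvRel (rhoM G)) psi coinvRel_le_psi
end Chunk5
section Chunk6
open MonoidAlgebra
variable {G : Type*} [Group G] [Fintype G]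

lemma rhoB_gm1I (g h : G) :
    idealRep G (augI G) g (gm1I G h) = gm1I G (g * h) - gm1I G g := by
  apply Subtype.ext
  rw [idealRep_coe]
  show MonoidAlgebra.of ℤ G g * (MonoidAlgebra.of ℤ G h - 1)
    = (MonoidAlgebra.of ℤ G (g*h) - 1) - (MonoidAlgebra.of ℤ G g - 1)
  rw [mul_sub, mul_one, MonoidAlgebra.of_apply, MonoidAlgebra.of_apply, MonoidAlgebra.of_apply,
    MonoidAlgebra.single_mul_single, one_mul]
  abel

lemma LnQ_mul (g h : G) : LnQ (gm1I G (g*h)) = LnQ (gm1I G g) + LnQ (gm1I G h) := by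
  have key : LnQ (gm1I G (g*h) - gm1I G g) = LnQ (gm1I G h) := by
    rw [LnQ_apply, LnQ_apply, ← rhoB_gm1I g h]
    rw [show (NeltN2 G ⊗ₜ[ℤ] (idealRep G (augI G) g (gm1I G h))
        : ↥((N2 G).restrictScalars ℤ) ⊗[ℤ] ↥((augI G).restrictScalars ℤ))
      = rhoM G g (NeltN2 G ⊗ₜ[ℤ] gm1I G h) by
        rw [show rhoM G g (NeltN2 G ⊗ₜ[ℤ] gm1I G h) = (idealRep G (N2 G) g (NeltN2 G)) ⊗ₜ[ℤ]
          (idealRep G (augI G) g (gm1I G h)) from rfl, rhoA_N]]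
    exact rel_mk g _
  rw [map_sub] at key
  rw [← key]
  abel

/-- The homomorphism `G → Q`, `g ↦ [N ⊗ (g-1)]`. -/
noncomputable def phiG : G →* Multiplicative (Coinv (rhoM G)) :=
  MonoidHom.mk' (fun g => Multiplicative.ofAdd (LnQ (gm1I G g)))
    (fun g h => by
      show Multiplicative.ofAdd (LnQ (gm1I G (g*h)))
        = Multiplicative.ofAdd (LnQ (gm1I G g) + LnQ (gm1I G h))
      rw [LnQ_mul])

/-- The induced homomorphism `G^{ab} → Q`. -/
noncomputable def FF : Additive (Abelianization G) →+ Coinv (rhoM G) :=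
  MonoidHom.toAdditiveLeft (Abelianization.lift phiG)

lemma FF_of (g : G) : FF (Additive.ofMul (Abelianization.of g)) = LnQ (gm1I G g) := by
  show Multiplicative.toAdd (Abelianization.lift phiG (Abelianization.of g)) = LnQ (gm1I G g)
  rw [Abelianization.lift_apply_of]
  rfl

lemma ab_surj (x : Additive (Abelianization G)) :
    ∃ g : G, Additive.ofMul (Abelianization.of g) = x := by
  have hsurj : Function.Surjective (Abelianization.of (G := G)) := Quotient.mk''_surjective
  obtain ⟨g, hg⟩ := hsurj (Additive.toMul x)
  exact ⟨g, by rw [hg]; rfl⟩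

lemma N_decomp : ((2:ℤ) • NeltN2 G : ↥((N2 G).restrictScalars ℤ)) = ∑ h : G, aElt h := by
  classical
  apply Subtype.ext
  rw [show (((2:ℤ) • NeltN2 G : ↥((N2 G).restrictScalars ℤ)) : MonoidAlgebra ℤ G)
    = (2:ℤ) • (Nelt G) from map_zsmul ((N2 G).restrictScalars ℤ).subtype 2 (NeltN2 G)]
  rw [show ((∑ h : G, aElt h : ↥((N2 G).restrictScalars ℤ)) : MonoidAlgebra ℤ G)
    = ∑ h : G, ((aElt h : ↥((N2 G).restrictScalars ℤ)) : MonoidAlgebra ℤ G) from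
      Submodule.coe_sum _ _ _]
  refine MonoidAlgebra.ext (Finsupp.ext fun x => ?_)
  rw [MonoidAlgebra.coeff_smul_apply, Nelt_apply, smul_eq_mul, mul_one]
  rw [show ((∑ h : G, ((aElt h : ↥((N2 G).restrictScalars ℤ)) : MonoidAlgebra ℤ G)).coeff x)
    = ∑ h : G, ((aElt h : ↥((N2 G).restrictScalars ℤ)) : MonoidAlgebra ℤ G).coeff x from
      (by rw [MonoidAlgebra.coeff_sum]; exact Finset.sum_apply' x)]
  have : ∀ h : G, ((aElt h : ↥((N2 G).restrictScalars ℤ)) : MonoidAlgebra ℤ G).coeff x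
      = 2 * (if h = x then 1 else 0) := fun h => by
    show ((2:ℤ) • (MonoidAlgebra.of ℤ G h) : MonoidAlgebra ℤ G).coeff x = 2 * (if h = x then 1 else 0)
    rw [MonoidAlgebra.coeff_smul_apply, MonoidAlgebra.of_apply, MonoidAlgebra.coeff_single_apply, smul_eq_mul]
  rw [Finset.sum_congr rfl fun h _ => this h]
  simp [Finset.sum_ite_eq']

lemma two_LnQ (b : ↥((augI G).restrictScalars ℤ)) : (2:ℤ) • LnQ b = 0 := by
  have h1 : (2:ℤ) • LnQ b = LbQ b ((2:ℤ) • NeltN2 G) := (map_zsmul (LbQ b) 2 (NeltN2 G)).symm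
  rw [h1, N_decomp, map_sum]
  rw [Finset.sum_congr rfl fun h _ => (by rw [LbQ_apply, A1, ← LcQ_apply] :
    LbQ b (aElt h) = LcQ (idealRep G (augI G) h⁻¹ b))]
  rw [← map_sum, sum_rhoB_inv, map_zero]

lemma two_FF (x : Additive (Abelianization G)) : (2:ℤ) • FF x = 0 := by
  obtain ⟨g, rfl⟩ := ab_surj x
  rw [FF_of]
  exact two_LnQ _

lemma zsmul_add_Q (n : ℤ) (u v : Coinv (rhoM G)) : n • (u + v) = n • u + n • v := by
  have e1 := int_smul_eq_zsmul (inferInstance : Module ℤ (Coinv (rhoM G))) n (u+v)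
  have e2 := int_smul_eq_zsmul (inferInstance : Module ℤ (Coinv (rhoM G))) n u
  have e3 := int_smul_eq_zsmul (inferInstance : Module ℤ (Coinv (rhoM G))) n v
  rw [← e1, ← e2, ← e3]
  exact smul_add n u v

/-- The bilinear map underlying `f₀`. -/
noncomputable def Phi : Additive (Abelianization G) →ₗ[ℤ]
    (ZMod 2 →ₗ[ℤ] Coinv (rhoM G)) where
  toFun x := zsm (FF x) (two_FF x)
  map_add' x y := by
    apply LinearMap.ext
    intro c
    show ((c.val : ℤ)) • FF (x + y) = (zsm (FF x) (two_FF x) + zsm (FF y) (two_FF y)) c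
    rw [LinearMap.add_apply, zsm_apply, zsm_apply, map_add, zsmul_add_Q]
  map_smul' n x := by
    apply LinearMap.ext
    intro c
    have e0 : FF (n • x) = n • FF x := by
      refine Eq.trans (congrArg FF (int_smul_eq_zsmul inferInstance n x)) ?_
      exact map_zsmul FF n x
    show ((c.val : ℤ)) • FF (n • x) = ((RingHom.id ℤ n) • zsm (FF x) (two_FF x)) c
    rw [LinearMap.smul_apply, zsm_apply, e0]
    refine Eq.trans ?_ (int_smul_eq_zsmul inferInstance n _).symm
    rw [← mul_zsmul, mul_comm, mul_zsmul]

/-- The map `f₀ : G^{ab} ⊗ ℤ/2 → Q`, `g ⊗ 1 ↦ [N ⊗ (g-1)]`. -/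
noncomputable def f0 : ((Additive (Abelianization G)) ⊗[ℤ] (ZMod 2)) →ₗ[ℤ] Coinv (rhoM G) :=
  TensorProduct.lift Phi

lemma f0_tmul (x : Additive (Abelianization G)) (c : ZMod 2) :
    f0 (x ⊗ₜ[ℤ] c) = ((c.val : ℤ)) • FF x := by
  rfl

end Chunk6
section Chunk7
open MonoidAlgebra
variable {G : Type*} [Group G] [Fintype G]

lemma sub_one_coe [DecidableEq G] (g : G) (x : G) :
    ((MonoidAlgebra.of ℤ G g - 1 : MonoidAlgebra ℤ G)).coeff x
      = (if g = x then 1 else 0) - (if (1:G) = x then 1 else 0) := by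
  classical
  rw [MonoidAlgebra.coeff_sub, Finsupp.sub_apply, MonoidAlgebra.of_apply, MonoidAlgebra.coeff_single_apply,
    show (1 : MonoidAlgebra ℤ G) = MonoidAlgebra.single 1 1 from MonoidAlgebra.one_def,
    MonoidAlgebra.coeff_single_apply]

lemma span_gm1I (v : ↥((augI G).restrictScalars ℤ)) :
    v ∈ Submodule.span ℤ (Set.range (gm1I G)) := by
  classical
  have hv : v = ∑ g : G, ((v : MonoidAlgebra ℤ G).coeff g) • gm1I G g := by
    apply Subtype.ext
    rw [show ((∑ g : G, ((v : MonoidAlgebra ℤ G).coeff g) • gm1I G g :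
        ↥((augI G).restrictScalars ℤ)) : MonoidAlgebra ℤ G)
      = ∑ g : G, ((((v : MonoidAlgebra ℤ G).coeff g) • gm1I G g :
        ↥((augI G).restrictScalars ℤ)) : MonoidAlgebra ℤ G) from Submodule.coe_sum _ _ _]
    have hc : ∀ g : G, ((((v : MonoidAlgebra ℤ G).coeff g) • gm1I G g :
        ↥((augI G).restrictScalars ℤ)) : MonoidAlgebra ℤ G)
        = ((v : MonoidAlgebra ℤ G).coeff g) • (MonoidAlgebra.of ℤ G g - 1) := fun g =>
      map_zsmul ((augI G).restrictScalars ℤ).subtype _ (gm1I G g)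
    rw [Finset.sum_congr rfl fun g _ => hc g]
    refine MonoidAlgebra.ext (Finsupp.ext fun x => ?_)
    rw [show ((∑ g : G, ((v : MonoidAlgebra ℤ G).coeff g) • (MonoidAlgebra.of ℤ G g - 1)
        : MonoidAlgebra ℤ G).coeff x)
      = ∑ g : G, (((v : MonoidAlgebra ℤ G).coeff g) • (MonoidAlgebra.of ℤ G g - 1)
        : MonoidAlgebra ℤ G).coeff x from (by rw [MonoidAlgebra.coeff_sum]; exact Finset.sum_apply' x)]
    have : ∀ g : G, (((v : MonoidAlgebra ℤ G).coeff g) • (MonoidAlgebra.of ℤ G g - 1)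
        : MonoidAlgebra ℤ G).coeff x
        = (v : MonoidAlgebra ℤ G).coeff g * ((if g = x then 1 else 0) - (if (1:G) = x then 1 else 0))
        := fun g => by rw [MonoidAlgebra.coeff_smul_apply, sub_one_coe, smul_eq_mul]
    rw [Finset.sum_congr rfl fun g _ => this g]
    have haug : ∑ g : G, (v : MonoidAlgebra ℤ G).coeff g = 0 := by
      rw [← aug_eq_sum]; exact v.2
    simp only [mul_sub]
    rw [Finset.sum_sub_distrib, ← Finset.sum_mul, haug, zero_mul, sub_zero]
    simp [Finset.sum_ite_eq', mul_comm]
  rw [hv]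
  exact Submodule.sum_mem _ fun g _ => Submodule.smul_mem _ _
    (Submodule.subset_span (Set.mem_range_self g))

lemma span_gm1I_top : Submodule.span ℤ (Set.range (gm1I G)) = ⊤ :=
  eq_top_iff.mpr fun v _ => span_gm1I v

lemma thetaAux_gm1 (g : G) :
    thetaAux ((MonoidAlgebra.of ℤ G g - 1 : MonoidAlgebra ℤ G)) = genT g := by
  rw [map_sub, show (1 : MonoidAlgebra ℤ G) = MonoidAlgebra.single 1 1 from
    MonoidAlgebra.one_def, MonoidAlgebra.of_apply, thetaAux_single, thetaAux_single,
    genT_one, one_smul, one_smul, sub_zero]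

lemma f0_theta (b : ↥((augI G).restrictScalars ℤ)) :
    f0 (thetaAux (b : MonoidAlgebra ℤ G)) = LnQ b := by
  have key : f0 ∘ₗ (theta (G := G)) = LnQ := by
    refine LinearMap.ext_on span_gm1I_top ?_
    rintro x ⟨g, rfl⟩
    rw [LinearMap.comp_apply, show theta (gm1I G g) = thetaAux
      ((MonoidAlgebra.of ℤ G g - 1 : MonoidAlgebra ℤ G)) from rfl, thetaAux_gm1, genT, f0_tmul]
    rw [show (((1 : ZMod 2)).val : ℤ) = 1 from rfl, one_smul, FF_of]
  exact congrFun (congrArg (fun f => f.toFun) key) b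

/-- The coefficient functionals on the tensor product. -/
noncomputable def lam (y : G) : (↥((N2 G).restrictScalars ℤ) ⊗[ℤ] ↥((augI G).restrictScalars ℤ))
    →ₗ[ℤ] ℤ :=
  TensorProduct.lift ((coeffA1 (G := G)).smulRight (coeffB y))

lemma lam_tmul (y : G) (a : ↥((N2 G).restrictScalars ℤ)) (b : ↥((augI G).restrictScalars ℤ)) :
    lam y (a ⊗ₜ[ℤ] b) = ((a : MonoidAlgebra ℤ G).coeff 1) * ((b : MonoidAlgebra ℤ G).coeff y) := by
  erw [lam, TensorProduct.lift.tmul, LinearMap.smulRight_apply]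
  rfl

lemma c_eq_zero (c : ↥((augI G).restrictScalars ℤ))
    (H : (∑ h : G, (aElt h) ⊗ₜ[ℤ] (idealRep G (augI G) h c)) = 0) : c = 0 := by
  classical
  apply Subtype.ext
  refine MonoidAlgebra.ext (Finsupp.ext fun y => ?_)
  have h0 := congrArg (lam y) H
  rw [map_sum, map_zero] at h0
  have hterm : ∀ h : G, lam y ((aElt h) ⊗ₜ[ℤ] (idealRep G (augI G) h c))
      = (if h = 1 then 2 else 0) * (c : MonoidAlgebra ℤ G).coeff (h⁻¹ * y) := by
    intro h
    rw [lam_tmul, idealRep_coe, MonoidAlgebra.of_apply, MonoidAlgebra.coeff_single_mul_apply, one_mul]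
    congr 1
    show ((2:ℤ) • (MonoidAlgebra.of ℤ G h) : MonoidAlgebra ℤ G).coeff 1 = (if h = 1 then 2 else 0)
    rw [MonoidAlgebra.coeff_smul_apply, MonoidAlgebra.of_apply, MonoidAlgebra.coeff_single_apply, smul_eq_mul]
    by_cases hh : h = 1 <;> simp [hh]
  rw [Finset.sum_congr rfl fun h _ => hterm h] at h0
  have h1 : ∑ h : G, (if h = 1 then 2 else 0) * (c : MonoidAlgebra ℤ G).coeff (h⁻¹ * y)
      = ∑ h : G, (if h = 1 then 2 * (c : MonoidAlgebra ℤ G).coeff (h⁻¹ * y) else 0) :=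
    Finset.sum_congr rfl fun h _ => by by_cases hh : h = 1 <;> simp [hh]
  rw [h1, Finset.sum_ite_eq' Finset.univ (1:G)
    (fun h => 2 * (c : MonoidAlgebra ℤ G).coeff (h⁻¹ * y))] at h0
  simp only [Finset.mem_univ, if_true, inv_one, one_mul] at h0
  have : (c : MonoidAlgebra ℤ G).coeff y = 0 := by linarith
  rw [this]
  rfl

lemma S1 (z : ↥((N2 G).restrictScalars ℤ) ⊗[ℤ] ↥((augI G).restrictScalars ℤ)) :
    ∃ b c : ↥((augI G).restrictScalars ℤ),
      (Submodule.Quotient.mk z : Coinv (rhoM G)) = LnQ b + LcQ c := by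
  induction z with
  | zero =>
      refine ⟨0, 0, ?_⟩
      rw [map_zero, map_zero, add_zero]
      exact (Submodule.Quotient.mk_zero _)
  | tmul a b0 =>
      obtain ⟨n, y, hny⟩ := N2_mem (a.2 : (a : MonoidAlgebra ℤ G) ∈ N2 G)
      have ha : a = n • NeltN2 G + ⟨(2:ℤ) • y, zsmul_mem_N2 y⟩ := by
        apply Subtype.ext
        rw [show (((n • NeltN2 G + ⟨(2:ℤ) • y, zsmul_mem_N2 y⟩ :
            ↥((N2 G).restrictScalars ℤ))) : MonoidAlgebra ℤ G)
          = n • (Nelt G) + (2:ℤ) • y from by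
            rw [Submodule.coe_add]
            congr 1]
        exact hny
      refine ⟨n • b0, ∑ h : G, (y.coeff h) • idealRep G (augI G) h⁻¹ b0, ?_⟩
      rw [show (Submodule.Quotient.mk (a ⊗ₜ[ℤ] b0) : Coinv (rhoM G)) = LbQ b0 a from rfl,
        ha, map_add, map_zsmul, show LbQ b0 (NeltN2 G) = LnQ b0 from rfl,
        ← map_zsmul LnQ n b0,
        show LbQ b0 (⟨(2:ℤ) • y, zsmul_mem_N2 y⟩ : ↥((N2 G).restrictScalars ℤ))
          = Submodule.Quotient.mk ((⟨(2:ℤ) • y, zsmul_mem_N2 y⟩ :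
            ↥((N2 G).restrictScalars ℤ)) ⊗ₜ[ℤ] b0) from rfl, claim1]
  | add z1 z2 h1 h2 =>
      obtain ⟨b1, c1, e1⟩ := h1
      obtain ⟨b2, c2, e2⟩ := h2
      refine ⟨b1 + b2, c1 + c2, ?_⟩
      rw [show (Submodule.Quotient.mk (z1 + z2) : Coinv (rhoM G))
        = Submodule.Quotient.mk z1 + Submodule.Quotient.mk z2 from rfl, e1, e2,
        map_add, map_add]
      abel

lemma normBar_mk (z : ↥((N2 G).restrictScalars ℤ) ⊗[ℤ] ↥((augI G).restrictScalars ℤ)) :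
    normBar (rhoM G) (Submodule.Quotient.mk z) = normMap (rhoM G) z := rfl

lemma psibar_mk (z : ↥((N2 G).restrictScalars ℤ) ⊗[ℤ] ↥((augI G).restrictScalars ℤ)) :
    psibar (Submodule.Quotient.mk z) = psi z := rfl

lemma psibar_LnQ (b : ↥((augI G).restrictScalars ℤ)) :
    psibar (LnQ b) = thetaAux (b : MonoidAlgebra ℤ G) := by
  rw [LnQ_apply, psibar_mk, psi_tmul, show ((NeltN2 G : ↥((N2 G).restrictScalars ℤ))
    : MonoidAlgebra ℤ G) = Nelt G from rfl, Nelt_apply, one_smul]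

lemma psibar_LcQ (c : ↥((augI G).restrictScalars ℤ)) : psibar (LcQ c) = 0 := by
  classical
  rw [LcQ_apply, psibar_mk, psi_tmul]
  have h2 : ((twoN2 G : ↥((N2 G).restrictScalars ℤ)) : MonoidAlgebra ℤ G).coeff 1 = 2 := by
    show ((2 : MonoidAlgebra ℤ G)).coeff 1 = 2
    rw [show (2 : MonoidAlgebra ℤ G) = 1 + 1 from one_add_one_eq_two.symm, MonoidAlgebra.coeff_add, Finsupp.add_apply,
      show (1 : MonoidAlgebra ℤ G) = MonoidAlgebra.single 1 1 from MonoidAlgebra.one_def,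
      MonoidAlgebra.coeff_single_apply]
    simp
  rw [h2]
  exact two_smul_T _

lemma keyD (q : Coinv (rhoM G)) (hq : normBar (rhoM G) q = 0) : f0 (psibar q) = q := by
  obtain ⟨z, rfl⟩ := Submodule.Quotient.mk_surjective _ q
  obtain ⟨b, c, hbc⟩ := S1 z
  have hc : c = 0 := by
    apply c_eq_zero
    rw [← normMap_two_tmul]
    have := hq
    rw [hbc, map_add] at this
    rw [show normBar (rhoM G) (LnQ b) = normMap (rhoM G) ((NeltN2 G) ⊗ₜ[ℤ] b) from
      normBar_mk _, normMap_N_tmul, zero_add] at this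
    rw [show normBar (rhoM G) (LcQ c) = normMap (rhoM G) ((twoN2 G) ⊗ₜ[ℤ] c) from
      normBar_mk _] at this
    exact this
  rw [hbc, hc, map_zero, add_zero, psibar_LnQ, f0_theta]

lemma f0_mem (t : (Additive (Abelianization G)) ⊗[ℤ] (ZMod 2)) :
    normBar (rhoM G) (f0 t) = 0 := by
  induction t with
  | zero => rw [map_zero, map_zero]
  | add t1 t2 h1 h2 => rw [map_add, map_add, h1, h2, add_zero]
  | tmul x c =>
      obtain ⟨g, rfl⟩ := ab_surj x
      rw [f0_tmul, FF_of, map_zsmul, show normBar (rhoM G) (LnQ (gm1I G g))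
        = normMap (rhoM G) ((NeltN2 G) ⊗ₜ[ℤ] (gm1I G g)) from normBar_mk _,
        normMap_N_tmul, smul_zero]

lemma zsmul_one_zmod (c : ZMod 2) : ((c.val : ℤ)) • (1 : ZMod 2) = c := by
  rw [zsmul_eq_mul, mul_one, Int.cast_natCast, ZMod.natCast_val, ZMod.cast_id]

lemma psibar_f0 (t : (Additive (Abelianization G)) ⊗[ℤ] (ZMod 2)) :
    psibar (f0 t) = t := by
  induction t with
  | zero => rw [map_zero, map_zero]
  | add t1 t2 h1 h2 => rw [map_add, map_add, h1, h2]
  | tmul x c =>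
      obtain ⟨g, rfl⟩ := ab_surj x
      rw [f0_tmul, FF_of, map_zsmul, psibar_LnQ, show thetaAux ((gm1I G g :
        ↥((augI G).restrictScalars ℤ)) : MonoidAlgebra ℤ G) = genT g from thetaAux_gm1 g]
      rw [genT]
      have hmk : ((c.val : ℤ)) • ((Additive.ofMul (Abelianization.of g)) ⊗ₜ[ℤ] (1 : ZMod 2))
          = (Additive.ofMul (Abelianization.of g)) ⊗ₜ[ℤ] (((c.val : ℤ)) • (1 : ZMod 2)) :=
        (map_zsmul (TensorProduct.mk ℤ (Additive (Abelianization G)) (ZMod 2)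
          (Additive.ofMul (Abelianization.of g))) ((c.val : ℤ)) (1 : ZMod 2)).symm
      rw [hmk, zsmul_one_zmod]

end Chunk7
section Final
open MonoidAlgebra
variable {G : Type*} [Group G] [Fintype G]

/-- The isomorphism `G^{ab} ⊗ ℤ/2 ≃ Ĥ₀(G; (N,2) ⊗ I)`. -/
noncomputable def finalEquiv : ((Additive (Abelianization G)) ⊗[ℤ] (ZMod 2)) ≃+
    ↥(LinearMap.ker (normBar (rhoM G))) where
  toFun t := ⟨f0 t, LinearMap.mem_ker.mpr (f0_mem t)⟩
  invFun k := psibar (k : Coinv (rhoM G))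
  left_inv t := psibar_f0 t
  right_inv k := Subtype.ext (keyD (k : Coinv (rhoM G)) (LinearMap.mem_ker.mp k.2))
  map_add' a b := Subtype.ext (map_add f0 a b)

end Final

/-- For a finite group `G`, the Tate homology group `Ĥ₀(G; (N,2) ⊗_ℤ I)` (the
kernel of the norm map on the coinvariants, with the diagonal `G`-action on the tensor product)
is isomorphic to `G^{ab} ⊗_ℤ ℤ/2` via the map sending `g ⊗ 1` to the class of `N ⊗ (g - 1)`. -/
theorem stmt13 {G : Type*} [Group G] [Fintype G] :
    ∃ e : (Additive (Abelianization G)) ⊗[ℤ] (ZMod 2) ≃+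
        ↥(LinearMap.ker (normBar ((idealRep G (N2 G)).tprod (idealRep G (augI G))))),
      ∀ g : G,
        ((e ((Additive.ofMul (Abelianization.of g)) ⊗ₜ[ℤ] (1 : ZMod 2)) :
            ↥(LinearMap.ker (normBar ((idealRep G (N2 G)).tprod (idealRep G (augI G)))))) :
          Coinv ((idealRep G (N2 G)).tprod (idealRep G (augI G)))) =
        Submodule.Quotient.mk ((NeltN2 G) ⊗ₜ[ℤ] (gm1I G g)) := by
  refine ⟨finalEquiv, fun g => ?_⟩
  show f0 ((Additive.ofMul (Abelianization.of g)) ⊗ₜ[ℤ] (1 : ZMod 2))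
    = Submodule.Quotient.mk ((NeltN2 G) ⊗ₜ[ℤ] (gm1I G g))
  rw [f0_tmul, FF_of, show (((1 : ZMod 2)).val : ℤ) = 1 from rfl, one_smul, LnQ_apply]
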